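/- arXiv:0901.3749 — 2 statements merged into one kernel-verified Lean document; each statement's English description precedes it below -/
import Mathlib

section
/- Let d ≥ 1 and n ≥ 2d, and let M_d denote the class of USSFs over Σ of dimension at most d. Then for any family (p(u))_{u∈Σ^{n+1}} of reals: there exists q ∈ M_d with q(u) = p(u) for all u ∈ Σ^{n+1} if and only if (i) for every a ∈ Σ there exists q_a ∈ M_d with q_a(v) = p(av) for all v ∈ Σ^n, and (ii) there exists q' ∈ M_d with q'(v) = Σ_{a∈Σ} p(va) for all v ∈ Σ^n. -/
set_option synthInstance.maxHeartbeats 1000000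

/-- The column `p^w` of the Hankel matrix of `p`, as a function `v ↦ p(wv)`. -/
def hankelCol {A : Type*} (p : List A → ℝ) (w : List A) : List A → ℝ :=
  fun v => p (w ++ v)

/-- The dimension of a string function: the rank of its Hankel matrix. -/
noncomputable def sfDim {A : Type*} (p : List A → ℝ) : Cardinal :=
  Module.rank ℝ ↥(Submodule.span ℝ (Set.range (hankelCol p)))

/-- The class `M_d` of unconstrained stochastic string functions of dimension at most `d`. -/
def Md {A : Type*} [Fintype A] (d : ℕ) : Set (List A → ℝ) :=
  {q | (∀ v : List A, 0 ≤ q v) ∧ (∀ v : List A, ∑ a : A, q (v ++ [a]) = q v) ∧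
    sfDim q ≤ (d : Cardinal)}

lemma hankelCol_append {A : Type*} (p : List A → ℝ) (w w' : List A) :
    hankelCol (hankelCol p w) w' = hankelCol p (w ++ w') := by
  funext v; simp [hankelCol, List.append_assoc]

/-- shift of a string function by a letter in front, as a linear map. -/
def shiftL {A : Type*} (a : A) : (List A → ℝ) →ₗ[ℝ] (List A → ℝ) where
  toFun f := fun v => f (a :: v)
  map_add' f g := rfl
  map_smul' c f := rfl

lemma hankelCol_concat {A : Type*} (p : List A → ℝ) (w : List A) (a : A) :
    hankelCol p (w ++ [a]) = shiftL a (hankelCol p w) := by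
  funext v; simp [hankelCol, shiftL, List.append_assoc]

lemma sfDim_hankelCol_le {A : Type*} (p : List A → ℝ) (w : List A) :
    sfDim (hankelCol p w) ≤ sfDim p := by
  apply Submodule.rank_mono
  apply Submodule.span_mono
  rintro _ ⟨w', rfl⟩
  exact ⟨w ++ w', (hankelCol_append p w w').symm⟩

/-- Fliess-type lemma: a string function whose Hankel matrix has rank at most `r`
and which vanishes on all strings of length `< r` vanishes identically. -/
lemma fliess {A : Type*} (s : List A → ℝ) (r : ℕ)
    (hr : Module.rank ℝ ↥(Submodule.span ℝ (Set.range (hankelCol s))) ≤ (r : Cardinal))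
    (hz : ∀ w : List A, w.length < r → s w = 0) :
    ∀ w : List A, s w = 0 := by
  by_cases hs0 : s = 0
  · intro w; simp [hs0]
  set V : Submodule ℝ (List A → ℝ) := Submodule.span ℝ (Set.range (hankelCol s)) with hV
  have hVfin : FiniteDimensional ℝ V :=
    Module.rank_lt_aleph0_iff.mp (hr.trans_lt (Cardinal.nat_lt_aleph0 r))
  have hVr : Module.finrank ℝ V ≤ r := Module.finrank_le_of_rank_le hr
  set W : ℕ → Submodule ℝ (List A → ℝ) :=
    fun k => Submodule.span ℝ (hankelCol s '' {w : List A | w.length ≤ k}) with hW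
  have hWmono : Monotone W := by
    intro i j hij
    exact Submodule.span_mono (Set.image_mono (fun w hw => le_trans hw hij))
  have hWV : ∀ k, W k ≤ V :=
    fun k => Submodule.span_mono (by rintro _ ⟨w, _, rfl⟩; exact ⟨w, rfl⟩)
  haveI : ∀ k, FiniteDimensional ℝ (W k) :=
    fun k => Submodule.finiteDimensional_of_le (hWV k)
  have hmem : ∀ w : List A, hankelCol s w ∈ W w.length :=
    fun w => Submodule.subset_span ⟨w, by simp, rfl⟩
  -- one step of stabilization
  have hstep : ∀ k : ℕ, W (k + 1) ≤ W k → W (k + 2) ≤ W (k + 1) := by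
    intro k hk
    rw [hW]
    apply Submodule.span_le.2
    rintro _ ⟨w, hw, rfl⟩
    rcases Nat.lt_or_ge w.length (k + 2) with h | h
    · exact hWmono (Nat.lt_succ_iff.mp h) (hmem w)
    · have hw2 : w.length = k + 2 := le_antisymm hw h
      rcases List.eq_nil_or_concat w with rfl | ⟨w', a, rfl⟩
      · simp at hw2
      simp only [List.concat_eq_append] at hw2 ⊢
      have hw' : w'.length = k + 1 := by
        simpa [List.length_append] using hw2
      have h1 : hankelCol s w' ∈ W k := by
        apply hk; rw [← hw']; exact hmem w'
      have h2 : shiftL a (hankelCol s w') ∈ Submodule.map (shiftL (A := A) a) (W k) :=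
        Submodule.mem_map_of_mem h1
      rw [hankelCol_concat]
      refine SetLike.le_def.mp ?_ h2
      rw [hW, Submodule.map_span]
      apply Submodule.span_le.2
      rintro _ ⟨_, ⟨u, hu, rfl⟩, rfl⟩
      rw [← hankelCol_concat]
      exact Submodule.subset_span ⟨u ++ [a], by simpa [List.length_append] using hu, rfl⟩
  -- full stabilization
  have hstab : ∀ k : ℕ, W (k + 1) ≤ W k → ∀ j, W (k + j) ≤ W k := by
    intro k hk
    have key : ∀ j, W (k + j + 1) ≤ W (k + j) := by
      intro j
      induction j with
      | zero => exact hk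
      | succ j ih => exact hstep (k + j) ih
    intro j
    induction j with
    | zero => exact le_refl _
    | succ j ih => exact le_trans (key j) ih
  -- there is a stabilization point below r
  have hex : ∃ k, k < r ∧ W (k + 1) ≤ W k := by
    by_contra hcon
    push_neg at hcon
    have hlt : ∀ k, k < r → W k < W (k + 1) := by
      intro k hk
      exact lt_of_le_of_ne (hWmono (Nat.le_succ k))
        (fun h => hcon k hk (le_of_eq h.symm))
    have hrank : ∀ k, k ≤ r → k + 1 ≤ Module.finrank ℝ (W k) := by
      intro k
      induction k with
      | zero =>
          intro _
          have hne : W 0 ≠ ⊥ := by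
            intro hbot
            apply hs0
            have : hankelCol s [] ∈ W 0 := hmem []
            rw [hbot] at this
            have h0 : hankelCol s [] = 0 := this
            funext w
            have := congrFun h0 w
            simpa [hankelCol] using this
          have : Nontrivial (W 0) := Submodule.nontrivial_iff_ne_bot.mpr hne
          have hpos : 0 < Module.finrank ℝ (W 0) := Module.finrank_pos_iff.mpr this
          omega
      | succ k ih =>
          intro hk
          have h1 := ih (le_of_lt (Nat.lt_of_succ_le hk))
          have h2 := Submodule.finrank_lt_finrank_of_lt (hlt k (Nat.lt_of_succ_le hk))
          omega
    have h1 := hrank r (le_refl r)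
    have h2 : Module.finrank ℝ (W r) ≤ Module.finrank ℝ V := Submodule.finrank_mono (hWV r)
    omega
  obtain ⟨k, hkr, hk⟩ := hex
  -- every column lies in W k
  have hcols : ∀ w : List A, hankelCol s w ∈ W k := by
    intro w
    have h1 : W w.length ≤ W (k + w.length) := hWmono (Nat.le_add_left _ _)
    exact hstab k hk w.length (h1 (hmem w))
  -- evaluation at the empty string kills W k
  have hker : W k ≤ LinearMap.ker (LinearMap.proj (R := ℝ) (φ := fun _ : List A => ℝ) []) := by
    apply Submodule.span_le.2
    rintro _ ⟨u, hu, rfl⟩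
    simp only [SetLike.mem_coe, LinearMap.mem_ker, LinearMap.proj_apply]
    have : s (u ++ []) = 0 := by
      apply hz
      simpa using lt_of_le_of_lt hu hkr
    simpa [hankelCol] using this
  intro w
  have := hker (hcols w)
  simp only [LinearMap.mem_ker, LinearMap.proj_apply] at this
  simpa [hankelCol] using this

/-- For `d ≥ 1` and `n ≥ 2d`: a family `(p(u))_{u ∈ Σ^{n+1}}` extends to
a USSF of dimension `≤ d` iff each shifted family `(p(av))_{v ∈ Σⁿ}` and the marginal
family `(∑_a p(va))_{v ∈ Σⁿ}` do. -/
theorem stmt10 {A : Type*} [Fintype A] [Nonempty A] (d n : ℕ)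
    (hd : 1 ≤ d) (hn : 2 * d ≤ n) (p : List A → ℝ) :
    (∃ q ∈ Md (A := A) d, ∀ u : List A, u.length = n + 1 → q u = p u) ↔
      ((∀ a : A, ∃ q ∈ Md (A := A) d, ∀ v : List A, v.length = n → q v = p (a :: v)) ∧
        (∃ q' ∈ Md (A := A) d, ∀ v : List A, v.length = n → q' v = ∑ a : A, p (v ++ [a]))) := by
  constructor
  · rintro ⟨q, ⟨hpos, hsum, hdim⟩, hmatch⟩
    constructor
    · intro a
      refine ⟨hankelCol q [a], ⟨fun v => hpos _, ?_, le_trans (sfDim_hankelCol_le q [a]) hdim⟩, ?_⟩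
      · intro v
        have : ∑ b : A, q (([a] ++ v) ++ [b]) = q ([a] ++ v) := hsum ([a] ++ v)
        simpa [hankelCol, List.append_assoc] using this
      · intro v hv
        have : q ([a] ++ v) = p ([a] ++ v) := hmatch _ (by simp [hv])
        simpa [hankelCol] using this
    · refine ⟨q, ⟨hpos, hsum, hdim⟩, ?_⟩
      intro v hv
      rw [← hsum v]
      exact Finset.sum_congr rfl (fun b _ => hmatch _ (by simp [hv]))
  · rintro ⟨h1, ⟨q', hq'Md, hq'⟩⟩
    choose qa hqaMd hqa using h1
    obtain ⟨m, rfl⟩ : ∃ m, n = m + 1 := ⟨n - 1, by omega⟩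
    -- the key claim: qa a v = q' (a :: v) for all a, v
    have key : ∀ (a : A) (v : List A), qa a v = q' (a :: v) := by
      intro a
      set s : List A → ℝ := fun v => qa a v - q' (a :: v) with hs
      have hs_col : ∀ w, hankelCol s w
          = hankelCol (qa a) w - hankelCol (hankelCol q' [a]) w := by
        intro w; funext v; simp [hankelCol, s, List.append_assoc]
      -- rank bound
      have hrank : Module.rank ℝ ↥(Submodule.span ℝ (Set.range (hankelCol s)))
          ≤ ((2 * d : ℕ) : Cardinal) := by
        set V1 := Submodule.span ℝ (Set.range (hankelCol (qa a)))
        set V2 := Submodule.span ℝ (Set.range (hankelCol (hankelCol q' [a])))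
        have hle : Submodule.span ℝ (Set.range (hankelCol s)) ≤ V1 ⊔ V2 := by
          apply Submodule.span_le.2
          rintro _ ⟨w, rfl⟩
          rw [hs_col]
          exact sub_mem (Submodule.mem_sup_left (Submodule.subset_span ⟨w, rfl⟩))
            (Submodule.mem_sup_right (Submodule.subset_span ⟨w, rfl⟩))
        calc Module.rank ℝ ↥(Submodule.span ℝ (Set.range (hankelCol s)))
            ≤ Module.rank ℝ ↥(V1 ⊔ V2) := Submodule.rank_mono hle
          _ ≤ Module.rank ℝ V1 + Module.rank ℝ V2 := Submodule.rank_add_le_rank_add_rank _ _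
          _ ≤ (d : Cardinal) + (d : Cardinal) :=
              add_le_add (hqaMd a).2.2 (le_trans (sfDim_hankelCol_le q' [a]) hq'Md.2.2)
          _ = ((2 * d : ℕ) : Cardinal) := by push_cast; ring
      -- vanishing at length exactly m
      have base : ∀ w : List A, w.length = m → s w = 0 := by
        intro w hw
        have h1 : qa a w = ∑ b : A, p (a :: (w ++ [b])) := by
          rw [← (hqaMd a).2.1 w]
          exact Finset.sum_congr rfl (fun b _ => hqa a _ (by simp [hw]))
        have h2 : q' (a :: w) = ∑ b : A, p ((a :: w) ++ [b]) :=
          hq' (a :: w) (by simp [hw])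
        simp only [s, h1, h2, List.cons_append, sub_self]
      -- vanishing at all lengths ≤ m
      have down : ∀ (k : ℕ) (w : List A), w.length + k = m → s w = 0 := by
        intro k
        induction k with
        | zero => intro w hw; exact base w (by omega)
        | succ k ih =>
            intro w hw
            have hsum_s : s w = ∑ b : A, s (w ++ [b]) := by
              have e1 : ∑ b : A, qa a (w ++ [b]) = qa a w := (hqaMd a).2.1 w
              have e2 : ∑ b : A, q' ((a :: w) ++ [b]) = q' (a :: w) := hq'Md.2.1 (a :: w)
              simp only [List.cons_append] at e2
              simp [s, Finset.sum_sub_distrib, e1, e2]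
            rw [hsum_s]
            refine Finset.sum_eq_zero (fun b _ => ih _ ?_)
            simp [List.length_append]; omega
      have hz : ∀ w : List A, w.length < 2 * d → s w = 0 := by
        intro w hw
        exact down (m - w.length) w (by omega)
      have := fliess s (2 * d) hrank hz
      intro v
      have hv := this v
      simp only [s] at hv
      linarith [hv]
    refine ⟨q', hq'Md, ?_⟩
    intro u hu
    cases u with
    | nil => simp at hu
    | cons a v =>
        have hv : v.length = m + 1 := by simpa using hu
        rw [← key a v]
        exact hqa a v hv
end

section
/- (Heller, 1965) A string function p : Σ* → ℝ is associated with an unconstrained hidden Markov process on some finite number l of hidden states if and only if there exist finitely many USSFs p_1,…,p_l, each lying in the column space C_p := span{p^w : w ∈ Σ*} of the Hankel matrix of p, such that (a) p is a nonnegative linear combination of p_1,…,p_l, and (b) for every w ∈ Σ* and every i, the column (p_i)^w : v ↦ p_i(wv) is a nonnegative linear combination of p_1,…,p_l. -/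
open Matrix

/-- For `v = a₁…aₙ`, the product `T_{aₙ} ⋯ T_{a₁}`. -/
def wordProd {A R : Type*} [Semiring R] {d : ℕ}
    (T : A → Matrix (Fin d) (Fin d) R) (v : List A) : Matrix (Fin d) (Fin d) R :=
  (v.reverse.map T).prod

/-- `p` is associated with an unconstrained hidden Markov process on `l` hidden states:
there are a row-stochastic nonnegative transition matrix `Am`, emission probabilities `E`,
and a nonnegative initial vector `π` such that, with `T_a := Amᵀ · diag(E · a)`,
`p(a₁…aₙ) = 𝟙ᵀ T_{aₙ} ⋯ T_{a₁} π`. -/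
def IsHMM {A : Type*} [Fintype A] (l : ℕ) (p : List A → ℝ) : Prop :=
  ∃ (Am : Matrix (Fin l) (Fin l) ℝ) (E : Fin l → A → ℝ) (π : Fin l → ℝ),
    (∀ i j, 0 ≤ Am i j) ∧ (∀ i, ∑ j, Am i j = 1) ∧
    (∀ i a, 0 ≤ E i a) ∧ (∀ i, ∑ a : A, E i a = 1) ∧ (∀ i, 0 ≤ π i) ∧
    ∀ v : List A,
      p v = (fun _ => (1 : ℝ)) ⬝ᵥ
        (wordProd (fun a => Amᵀ * Matrix.diagonal fun i => E i a) v) *ᵥ π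


open Finset

section Cone
variable {E : Type*} [AddCommMonoid E] [Module ℝ E]

/-- `z` is a nonnegative combination of the family `x`. -/
def IsConeComb {ι : Type} [Fintype ι] (x : ι → E) (z : E) : Prop :=
  ∃ c : ι → ℝ, (∀ i, 0 ≤ c i) ∧ z = ∑ i, c i • x i

lemma isConeComb_zero {ι : Type} [Fintype ι] (x : ι → E) : IsConeComb x 0 :=
  ⟨0, fun _ => le_refl _, by simp⟩

lemma isConeComb_self {ι : Type} [Fintype ι] (x : ι → E) (i : ι) : IsConeComb x (x i) := by
  classical
  refine ⟨fun j => if j = i then 1 else 0, fun j => by dsimp only; split <;> norm_num, ?_⟩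
  simp [ite_smul]

lemma isConeComb_reindex {ι κ : Type} [Fintype ι] [Fintype κ] (e : κ ≃ ι) (x : ι → E) (z : E)
    (h : IsConeComb (x ∘ e) z) : IsConeComb x z := by
  obtain ⟨c, hc, hz⟩ := h
  refine ⟨c ∘ e.symm, fun i => hc _, ?_⟩
  rw [hz, ← Equiv.sum_comp e (fun i => (c ∘ e.symm) i • x i)]
  simp

lemma isConeComb_trans {ι κ : Type} [Fintype ι] [Fintype κ] (x : ι → E) (y : κ → E)
    (hy : ∀ k, IsConeComb x (y k)) (z : E) (hz : IsConeComb y z) : IsConeComb x z := by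
  choose d hd0 hdy using hy
  obtain ⟨c, hc0, hz⟩ := hz
  refine ⟨fun i => ∑ k, c k * d k i, fun i => Finset.sum_nonneg fun k _ =>
    mul_nonneg (hc0 k) (hd0 k i), ?_⟩
  rw [hz]
  calc ∑ k, c k • y k = ∑ k, ∑ i, (c k * d k i) • x i := by
        refine Finset.sum_congr rfl fun k _ => ?_
        rw [hdy k, Finset.smul_sum]
        simp [smul_smul]
    _ = ∑ i, ∑ k, (c k * d k i) • x i := Finset.sum_comm
    _ = ∑ i, (∑ k, c k * d k i) • x i := by
        refine Finset.sum_congr rfl fun i _ => ?_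
        rw [Finset.sum_smul]

end Cone

section FM
variable {E : Type*} [AddCommMonoid E] [Module ℝ E]

lemma fm_step {ι : Type} [Fintype ι] (x : ι → E) (f : E →ₗ[ℝ] ℝ) :
    ∃ (κ : Type) (_ : Fintype κ) (y : κ → E),
      (∀ k, IsConeComb x (y k)) ∧ (∀ k, f (y k) = 0) ∧
      ∀ z, IsConeComb x z → f z = 0 → IsConeComb y z := by
  classical
  set F : ι → ℝ := fun i => f (x i) with hF
  refine ⟨ι ⊕ ι × ι, inferInstance,
    (fun k => match k with
      | Sum.inl i => if F i = 0 then x i else 0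
      | Sum.inr (i, j) => if 0 < F i ∧ F j < 0 then (-(F j)) • x i + (F i) • x j else 0),
    ?_, ?_, ?_⟩
  · rintro (i | ⟨i, j⟩)
    · dsimp only; split
      · exact isConeComb_self x i
      · exact isConeComb_zero x
    · dsimp only; split
      · rename_i h
        refine ⟨fun k => (if k = i then -(F j) else 0) + (if k = j then F i else 0),
          fun k => by dsimp only; split <;> split <;> nlinarith [h.1, h.2], ?_⟩
        simp [add_smul, ite_smul, Finset.sum_add_distrib]
      · exact isConeComb_zero x
  · rintro (i | ⟨i, j⟩)
    · dsimp only; split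
      · assumption
      · simp
    · dsimp only; split
      · simp only [map_add, LinearMap.map_smul, smul_eq_mul]
        ring
      · simp
  · rintro z ⟨c, hc0, hz⟩ hfz
    have hsum : ∑ i, c i * F i = 0 := by
      rw [← hfz, hz, map_sum]
      simp [hF]
    set S : ℝ := ∑ i, if 0 < F i then c i * F i else 0 with hS
    have hS0 : 0 ≤ S := Finset.sum_nonneg fun i _ => by
      split
      · exact mul_nonneg (hc0 i) (by linarith [‹0 < F i›])
      · exact le_refl _
    have hT : (∑ i, if F i < 0 then c i * (-(F i)) else 0) = S := by
      have h3 : ∀ i : ι, (if 0 < F i then c i * F i else 0)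
          - (if F i < 0 then c i * (-(F i)) else 0)
          = c i * F i := by
        intro i
        rcases lt_trichotomy (F i) 0 with h | h | h
        · simp [not_lt.mpr h.le, h]
        · simp [h]
        · simp [h, not_lt.mpr h.le]
      have := Finset.sum_congr rfl (fun i (_ : i ∈ Finset.univ) => (h3 i))
      rw [Finset.sum_sub_distrib] at this
      rw [hsum] at this
      linarith [this]
    by_cases hScase : S = 0
    · -- all coefficients with F i ≠ 0 vanish
      have hP : ∀ i, 0 < F i → c i = 0 := by
        intro i hi
        have := (Finset.sum_eq_zero_iff_of_nonneg (fun j _ => by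
          split
          · exact mul_nonneg (hc0 j) (by linarith [‹0 < F j›])
          · exact le_refl _)).mp (hS ▸ hScase) i (Finset.mem_univ i)
        simp only [hi, if_pos] at this
        have := mul_eq_zero.mp this
        rcases this with h | h
        · exact h
        · exact absurd h (ne_of_gt hi)
      have hN : ∀ i, F i < 0 → c i = 0 := by
        intro i hi
        have hT0 : (∑ j, if F j < 0 then c j * (-(F j)) else 0) = 0 := by rw [hT]; exact hScase
        have := (Finset.sum_eq_zero_iff_of_nonneg (fun j _ => by
          split
          · exact mul_nonneg (hc0 j) (by linarith [‹F j < 0›])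
          · exact le_refl _)).mp hT0 i (Finset.mem_univ i)
        simp only [hi, if_pos] at this
        rcases mul_eq_zero.mp this with h | h
        · exact h
        · exact absurd h (by simpa using (ne_of_lt hi))
      refine ⟨fun k => match k with
        | Sum.inl i => c i
        | Sum.inr _ => 0, ?_, ?_⟩
      · rintro (i | ⟨i, j⟩)
        · exact hc0 i
        · exact le_refl _
      · rw [hz, Fintype.sum_sum_type]
        simp only [zero_smul, Finset.sum_const_zero, add_zero]
        refine Finset.sum_congr rfl fun i _ => ?_
        rcases lt_trichotomy (F i) 0 with h | h | h
        · simp [hN i h, ne_of_lt h]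
        · simp [h]
        · simp [hP i h, ne_of_gt h]
    · have hSpos : 0 < S := lt_of_le_of_ne hS0 (Ne.symm hScase)
      refine ⟨fun k => match k with
        | Sum.inl i => if F i = 0 then c i else 0
        | Sum.inr (i, j) => if 0 < F i ∧ F j < 0 then c i * c j / S else 0, ?_, ?_⟩
      · rintro (i | ⟨i, j⟩)
        · dsimp only; split
          · exact hc0 i
          · exact le_refl _
        · dsimp only; split
          · exact div_nonneg (mul_nonneg (hc0 i) (hc0 j)) hS0
          · exact le_refl _
      · rw [hz, Fintype.sum_sum_type]
        have hinl : (∑ i, (if F i = 0 then c i else 0) • if F i = 0 then x i else 0)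
            = ∑ i, (if F i = 0 then c i else 0) • x i := by
          refine Finset.sum_congr rfl fun i _ => ?_
          by_cases h : F i = 0 <;> simp [h]
        rw [hinl]
        have hinr : (∑ k : ι × ι, (if 0 < F k.1 ∧ F k.2 < 0 then c k.1 * c k.2 / S else 0) •
              if 0 < F k.1 ∧ F k.2 < 0 then (-(F k.2)) • x k.1 + (F k.1) • x k.2 else 0)
            = (∑ i, (if 0 < F i then c i else 0) • x i)
              + ∑ i, (if F i < 0 then c i else 0) • x i := by
          rw [Fintype.sum_prod_type]
          have hterm : ∀ i j : ι,
              ((if 0 < F i ∧ F j < 0 then c i * c j / S else 0) •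
                if 0 < F i ∧ F j < 0 then (-(F j)) • x i + (F i) • x j else 0)
              = ((if 0 < F i then c i / S else 0) * (if F j < 0 then c j * (-(F j)) else 0)) • x i
                + ((if F j < 0 then c j / S else 0) * (if 0 < F i then c i * F i else 0)) • x j := by
            intro i j
            by_cases h1 : 0 < F i <;> by_cases h2 : F j < 0 <;>
              simp [h1, h2, smul_add, smul_smul] <;> ring_nf <;>
              constructor <;> ring
          calc (∑ i, ∑ j, (if 0 < F i ∧ F j < 0 then c i * c j / S else 0) •
                if 0 < F i ∧ F j < 0 then (-(F j)) • x i + (F i) • x j else 0)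
              = ∑ i, ∑ j, (((if 0 < F i then c i / S else 0) * (if F j < 0 then c j * (-(F j)) else 0)) • x i
                + ((if F j < 0 then c j / S else 0) * (if 0 < F i then c i * F i else 0)) • x j) := by
                refine Finset.sum_congr rfl fun i _ => Finset.sum_congr rfl fun j _ => hterm i j
            _ = (∑ i, (if 0 < F i then c i else 0) • x i)
                + ∑ j, (if F j < 0 then c j else 0) • x j := by
                simp only [Finset.sum_add_distrib]
                congr 1
                · refine Finset.sum_congr rfl fun i _ => ?_
                  rw [← Finset.sum_smul, ← Finset.mul_sum, hT]
                  by_cases h : 0 < F i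
                  · simp [h]; field_simp
                  · simp [h]
                · rw [Finset.sum_comm]
                  refine Finset.sum_congr rfl fun j _ => ?_
                  rw [← Finset.sum_smul, ← Finset.mul_sum, ← hS]
                  by_cases h : F j < 0
                  · simp [h]; field_simp
                  · simp [h]
        rw [hinr]
        rw [← Finset.sum_add_distrib, ← Finset.sum_add_distrib]
        refine Finset.sum_congr rfl fun i _ => ?_
        rw [← add_smul, ← add_smul]
        congr 1
        rcases lt_trichotomy (F i) 0 with h | h | h
        · simp [h, not_lt.mpr h.le, ne_of_lt h]
        · simp [h]
        · simp [h, not_lt.mpr h.le, ne_of_gt h]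

end FM

section FM2
variable {E : Type*} [AddCommMonoid E] [Module ℝ E]

lemma fm_list (fs : List (E →ₗ[ℝ] ℝ)) {ι : Type} [Fintype ι] (x : ι → E) :
    ∃ (κ : Type) (_ : Fintype κ) (y : κ → E),
      (∀ k, IsConeComb x (y k)) ∧ (∀ k, ∀ g ∈ fs, g (y k) = 0) ∧
      ∀ z, IsConeComb x z → (∀ g ∈ fs, g z = 0) → IsConeComb y z := by
  induction fs generalizing ι with
  | nil =>
    exact ⟨ι, inferInstance, x, fun k => isConeComb_self x k, by simp, fun z hz _ => hz⟩
  | cons f fs ih =>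
    obtain ⟨κ, instκ, y, hy1, hy2, hy3⟩ := fm_step x f
    obtain ⟨κ', instκ', y', hy1', hy2', hy3'⟩ := @ih κ instκ y
    refine ⟨κ', instκ', y', fun k => isConeComb_trans x y hy1 _ (hy1' k), ?_, ?_⟩
    · intro k g hg
      rcases List.mem_cons.mp hg with h | h
      · subst h
        obtain ⟨c, hc0, hrep⟩ := hy1' k
        rw [hrep, map_sum]
        refine Finset.sum_eq_zero fun j _ => ?_
        rw [LinearMap.map_smul, hy2 j, smul_zero]
      · exact hy2' k g h
    · intro z hz hz0
      refine hy3' z (hy3 z hz (hz0 f List.mem_cons_self)) fun g hg =>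
        hz0 g (List.mem_cons_of_mem f hg)

/-- A subspace of a finite-dimensional space is the common kernel of finitely many
functionals. -/
lemma subspace_functionals {n : ℕ} (V : Submodule ℝ (Fin n → ℝ)) :
    ∃ fs : List ((Fin n → ℝ) →ₗ[ℝ] ℝ), ∀ z, z ∈ V ↔ ∀ g ∈ fs, g z = 0 := by
  classical
  set Q := (Fin n → ℝ) ⧸ V
  have : FiniteDimensional ℝ Q := inferInstance
  set b := Module.finBasis ℝ Q with hb
  set r := Module.finrank ℝ Q
  refine ⟨(List.finRange r).map (fun k => (b.coord k).comp V.mkQ), fun z => ?_⟩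
  constructor
  · intro hz g hg
    simp only [List.mem_map] at hg
    obtain ⟨k, _, rfl⟩ := hg
    have : V.mkQ z = 0 := by
      rw [Submodule.mkQ_apply, Submodule.Quotient.mk_eq_zero]
      exact hz
    simp [this]
  · intro h
    have h0 : V.mkQ z = 0 := by
      have hrep : b.repr (V.mkQ z) = 0 := by
        ext k
        have := h ((b.coord k).comp V.mkQ) (by
          simp only [List.mem_map]
          exact ⟨k, List.mem_finRange k, rfl⟩)
        simp [Module.Basis.coord_apply] at this; exact this
      have := b.repr.injective (by rw [hrep, map_zero] : b.repr (V.mkQ z) = b.repr 0)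
      exact this
    rwa [Submodule.mkQ_apply, Submodule.Quotient.mk_eq_zero] at h0

lemma isConeComb_single_iff {n : ℕ} (z : Fin n → ℝ) :
    IsConeComb (fun i => Pi.single i (1:ℝ)) z ↔ ∀ i, 0 ≤ z i := by
  classical
  constructor
  · rintro ⟨c, hc0, hz⟩ i
    have : z i = c i := by
      rw [hz]
      simp [Pi.single_apply, Finset.sum_apply]
    rw [this]; exact hc0 i
  · intro hz
    refine ⟨z, hz, ?_⟩
    funext j
    simp [Pi.single_apply, Finset.sum_apply, mul_ite]

end FM2

section WordProd
variable {A R : Type*} [Semiring R] {d : ℕ} (T : A → Matrix (Fin d) (Fin d) R)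

lemma wordProd_nil : wordProd T ([] : List A) = 1 := rfl

lemma wordProd_singleton (a : A) : wordProd T [a] = T a := by
  simp [wordProd]

lemma wordProd_append (w v : List A) :
    wordProd T (w ++ v) = wordProd T v * wordProd T w := by
  unfold wordProd
  rw [List.reverse_append, List.map_append, List.prod_append]

lemma wordProd_cons (a : A) (v : List A) :
    wordProd T (a :: v) = wordProd T v * T a := by
  have : a :: v = [a] ++ v := rfl
  rw [this, wordProd_append, wordProd_singleton]

lemma wordProd_concat (a : A) (v : List A) :
    wordProd T (v ++ [a]) = T a * wordProd T v := by
  rw [wordProd_append, wordProd_singleton]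

end WordProd

section Fwd
variable {A : Type*} [Fintype A] {l : ℕ}

lemma wordProd_nonneg (T : A → Matrix (Fin l) (Fin l) ℝ)
    (hT : ∀ a i j, 0 ≤ T a i j) (v : List A) : ∀ i j, 0 ≤ wordProd T v i j := by
  induction v with
  | nil => intro i j; rw [wordProd_nil]; by_cases h : i = j <;> simp [Matrix.one_apply, h]
  | cons a v ih =>
    intro i j
    rw [wordProd_cons, Matrix.mul_apply]
    exact Finset.sum_nonneg fun k _ => mul_nonneg (ih i k) (hT a k j)

/-- The linear map `x ↦ (v ↦ 𝟙ᵀ (wordProd T v) x)`. -/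
def phiMap (T : A → Matrix (Fin l) (Fin l) ℝ) : (Fin l → ℝ) →ₗ[ℝ] (List A → ℝ) where
  toFun x := fun v => (fun _ => (1 : ℝ)) ⬝ᵥ (wordProd T v *ᵥ x)
  map_add' x y := by
    funext v
    simp [Matrix.mulVec_add, dotProduct_add]
  map_smul' c x := by
    funext v
    simp [Matrix.mulVec_smul, dotProduct_smul]

lemma phiMap_apply (T : A → Matrix (Fin l) (Fin l) ℝ) (x : Fin l → ℝ) (v : List A) :
    phiMap T x v = (fun _ => (1 : ℝ)) ⬝ᵥ (wordProd T v *ᵥ x) := rfl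

lemma phiMap_shift (T : A → Matrix (Fin l) (Fin l) ℝ) (x : Fin l → ℝ) (w v : List A) :
    phiMap T x (w ++ v) = phiMap T (wordProd T w *ᵥ x) v := by
  simp only [phiMap_apply, wordProd_append, ← Matrix.mulVec_mulVec]

lemma phiMap_nonneg (T : A → Matrix (Fin l) (Fin l) ℝ) (hT : ∀ a i j, 0 ≤ T a i j)
    (x : Fin l → ℝ) (hx : ∀ i, 0 ≤ x i) (v : List A) : 0 ≤ phiMap T x v := by
  rw [phiMap_apply]
  unfold dotProduct Matrix.mulVec
  refine Finset.sum_nonneg fun j _ => ?_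
  rw [one_mul]
  exact Finset.sum_nonneg fun k _ => mul_nonneg (wordProd_nonneg T hT v j k) (hx k)

end Fwd

section Fwd2
variable {A : Type*} [Fintype A] {l : ℕ}

lemma T_entry (Am : Matrix (Fin l) (Fin l) ℝ) (E : Fin l → A → ℝ) (a : A) (i j : Fin l) :
    (Amᵀ * Matrix.diagonal fun k => E k a) i j = Am j i * E j a := by
  rw [Matrix.mul_diagonal, Matrix.transpose_apply]

lemma one_dot_mulVec (M : Matrix (Fin l) (Fin l) ℝ) (y : Fin l → ℝ) :
    (fun _ => (1:ℝ)) ⬝ᵥ (M *ᵥ y) = ∑ j, ∑ m, M j m * y m := by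
  simp [dotProduct, Matrix.mulVec]

lemma phiMap_ussf (Am : Matrix (Fin l) (Fin l) ℝ) (E : Fin l → A → ℝ)
    (hAm1 : ∀ i, ∑ j, Am i j = 1) (hE1 : ∀ i, ∑ a : A, E i a = 1)
    (x : Fin l → ℝ) (v : List A) :
    ∑ a : A, phiMap (fun a => Amᵀ * Matrix.diagonal fun k => E k a) x (v ++ [a])
      = phiMap (fun a => Amᵀ * Matrix.diagonal fun k => E k a) x v := by
  set T := fun a => Amᵀ * Matrix.diagonal fun k => E k a with hT
  set y := wordProd T v *ᵥ x with hy
  have h1 : ∀ a, phiMap T x (v ++ [a]) = ∑ j, ∑ m, Am m j * E m a * y m := by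
    intro a
    rw [phiMap_apply, wordProd_concat, ← Matrix.mulVec_mulVec, ← hy, one_dot_mulVec]
    refine Finset.sum_congr rfl fun j _ => Finset.sum_congr rfl fun m _ => ?_
    rw [hT]
    dsimp only
    rw [T_entry]
  have h2 : phiMap T x v = ∑ m, y m := by
    rw [phiMap_apply, ← hy]
    simp [dotProduct]
  rw [h2]
  calc ∑ a : A, phiMap T x (v ++ [a]) = ∑ a : A, ∑ j, ∑ m, Am m j * E m a * y m :=
        Finset.sum_congr rfl fun a _ => h1 a
    _ = ∑ j, ∑ m, ∑ a : A, Am m j * E m a * y m := by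
        rw [Finset.sum_comm]
        exact Finset.sum_congr rfl fun j _ => Finset.sum_comm
    _ = ∑ m, ∑ j, ∑ a : A, Am m j * E m a * y m := Finset.sum_comm
    _ = ∑ m, y m := by
        refine Finset.sum_congr rfl fun m _ => ?_
        have hj : ∀ j, ∑ a : A, Am m j * E m a * y m = Am m j * y m := by
          intro j
          have : ∑ a : A, Am m j * E m a * y m = Am m j * y m * ∑ a : A, E m a := by
            rw [Finset.mul_sum]
            exact Finset.sum_congr rfl fun a _ => by ring
          rw [this, hE1 m, mul_one]
        rw [Finset.sum_congr rfl fun j (_ : j ∈ Finset.univ) => hj j, ← Finset.sum_mul,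
          hAm1 m, one_mul]

lemma mulVec_nonneg (M : Matrix (Fin l) (Fin l) ℝ) (hM : ∀ i j, 0 ≤ M i j)
    (x : Fin l → ℝ) (hx : ∀ i, 0 ≤ x i) : ∀ i, 0 ≤ (M *ᵥ x) i := by
  intro i
  unfold Matrix.mulVec dotProduct
  exact Finset.sum_nonneg fun k _ => mul_nonneg (hM i k) (hx k)

/-- Shift operator as a linear map. -/
def shiftMap {A : Type*} (w : List A) : (List A → ℝ) →ₗ[ℝ] (List A → ℝ) where
  toFun f := fun v => f (w ++ v)
  map_add' f g := rfl
  map_smul' c f := rfl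

lemma shift_mem_span {A : Type*} (p : List A → ℝ) (w : List A) (f : List A → ℝ)
    (hf : f ∈ Submodule.span ℝ (Set.range (hankelCol p))) :
    (fun v => f (w ++ v)) ∈ Submodule.span ℝ (Set.range (hankelCol p)) := by
  have h : shiftMap w f ∈ Submodule.map (shiftMap w)
      (Submodule.span ℝ (Set.range (hankelCol p))) := Submodule.mem_map_of_mem hf
  rw [Submodule.map_span] at h
  have hsub : (shiftMap w : (List A → ℝ) → (List A → ℝ)) '' Set.range (hankelCol p)
      ⊆ Set.range (hankelCol p) := by
    rintro _ ⟨_, ⟨u, rfl⟩, rfl⟩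
    refine ⟨u ++ w, ?_⟩
    funext v
    simp [hankelCol, shiftMap, List.append_assoc]
  exact Submodule.span_mono hsub h

end Fwd2

lemma isConeComb_comp_equiv {E : Type*} [AddCommMonoid E] [Module ℝ E]
    {ι κ : Type} [Fintype ι] [Fintype κ] (e : κ ≃ ι) (x : ι → E) (z : E)
    (h : IsConeComb x z) : IsConeComb (x ∘ e) z := by
  obtain ⟨c, hc0, hz⟩ := h
  refine ⟨c ∘ e, fun k => hc0 _, ?_⟩
  rw [hz, ← Equiv.sum_comp e (fun i => c i • x i)]
  simp

section FwdMain
variable {A : Type*} [Fintype A]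

lemma forward_dir (p : List A → ℝ) (h : ∃ l : ℕ, IsHMM l p) :
    ∃ (l : ℕ) (q : Fin l → (List A → ℝ)),
      (∀ i, (∀ v : List A, 0 ≤ q i v) ∧
        ∀ v : List A, ∑ a : A, q i (v ++ [a]) = q i v) ∧
      (∀ i, q i ∈ Submodule.span ℝ (Set.range (hankelCol p))) ∧
      (∃ c : Fin l → ℝ, (∀ i, 0 ≤ c i) ∧ ∀ v : List A, p v = ∑ i, c i * q i v) ∧
      (∀ (w : List A) (i : Fin l), ∃ c : Fin l → ℝ, (∀ j, 0 ≤ c j) ∧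
        ∀ v : List A, q i (w ++ v) = ∑ j, c j * q j v) := by
  classical
  obtain ⟨l, Am, E, π, hAm0, hAm1, hE0, hE1, hπ0, hp⟩ := h
  set T : A → Matrix (Fin l) (Fin l) ℝ := fun a => Amᵀ * Matrix.diagonal fun i => E i a
    with hTdef
  have hT0 : ∀ a i j, 0 ≤ T a i j := by
    intro a i j
    rw [hTdef]
    dsimp only
    rw [T_entry]
    exact mul_nonneg (hAm0 j i) (hE0 j a)
  set Cp := Submodule.span ℝ (Set.range (hankelCol p)) with hCp
  set V : Submodule ℝ (Fin l → ℝ) := Cp.comap (phiMap T) with hV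
  obtain ⟨fs, hfs⟩ := subspace_functionals V
  obtain ⟨κ, instκ, y, hy1, hy2, hy3⟩ := fm_list fs (fun i : Fin l => Pi.single i (1:ℝ))
  letI : Fintype κ := instκ
  set e : Fin (Fintype.card κ) ≃ κ := (Fintype.equivFin κ).symm with he
  set g : Fin (Fintype.card κ) → (Fin l → ℝ) := y ∘ e with hg
  -- basic facts
  have hpphi : p = phiMap T π := funext fun v => hp v
  have hpCp : phiMap T π ∈ Cp := by
    rw [← hpphi]
    have : p = hankelCol p [] := by funext v; simp [hankelCol]
    rw [this]
    exact Submodule.subset_span ⟨[], rfl⟩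
  have key : ∀ x : Fin l → ℝ, (∀ i, 0 ≤ x i) → phiMap T x ∈ Cp → IsConeComb g x := by
    intro x hx hxc
    refine isConeComb_comp_equiv e y x (hy3 x ((isConeComb_single_iff x).mpr hx) ?_)
    intro f hf
    exact (hfs x).mp (by rwa [hV, Submodule.mem_comap]) f hf
  have hg0 : ∀ k i, 0 ≤ g k i := fun k => (isConeComb_single_iff (g k)).mp
    (isConeComb_trans _ _ (fun j => hy1 j) _ (isConeComb_self y (e k)))
  have hgV : ∀ k, g k ∈ V := fun k => (hfs (g k)).mpr fun f hf => hy2 (e k) f hf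
  refine ⟨Fintype.card κ, fun k => phiMap T (g k), ?_, ?_, ?_, ?_⟩
  · intro k
    exact ⟨fun v => phiMap_nonneg T hT0 (g k) (hg0 k) v,
      fun v => phiMap_ussf Am E hAm1 hE1 (g k) v⟩
  · intro k
    exact (hgV k : g k ∈ V)
  · obtain ⟨c, hc0, hπ⟩ := key π hπ0 hpCp
    refine ⟨c, hc0, fun v => ?_⟩
    rw [hp v, ← phiMap_apply, hπ, map_sum]
    simp [Finset.sum_apply]
  · intro w k
    set x := wordProd T w *ᵥ g k with hx
    have hx0 : ∀ i, 0 ≤ x i := mulVec_nonneg _ (wordProd_nonneg T hT0 w) _ (hg0 k)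
    have hxphi : phiMap T x = fun v => phiMap T (g k) (w ++ v) := by
      funext v
      rw [phiMap_shift]
    have hxC : phiMap T x ∈ Cp := by
      rw [hxphi]
      exact shift_mem_span p w _ (hgV k)
    obtain ⟨c, hc0, hrep⟩ := key x hx0 hxC
    refine ⟨c, hc0, fun v => ?_⟩
    show phiMap T (g k) (w ++ v) = ∑ j, c j * phiMap T (g j) v
    rw [phiMap_shift, ← hx, hrep, map_sum]
    simp [Finset.sum_apply]

end FwdMain

section Rev
variable {A : Type*} [Fintype A] [Nonempty A]

lemma q_vanish (q : List A → ℝ) (hq0 : ∀ v, 0 ≤ q v)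
    (hq1 : ∀ v, ∑ a : A, q (v ++ [a]) = q v) :
    ∀ (u w : List A), q w = 0 → q (w ++ u) = 0 := by
  intro u
  induction u with
  | nil => intro w h; simpa using h
  | cons b u ih =>
    intro w h
    have hb : q (w ++ [b]) = 0 := by
      have hsum : ∑ a : A, q (w ++ [a]) = 0 := by rw [hq1 w, h]
      exact (Finset.sum_eq_zero_iff_of_nonneg fun a _ => hq0 (w ++ [a])).mp hsum b
        (Finset.mem_univ b)
    have : w ++ b :: u = (w ++ [b]) ++ u := by simp
    rw [this]
    exact ih (w ++ [b]) hb

lemma reverse_dir (p : List A → ℝ) (l : ℕ) (q : Fin l → List A → ℝ)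
    (hq : ∀ i, (∀ v : List A, 0 ≤ q i v) ∧ ∀ v : List A, ∑ a : A, q i (v ++ [a]) = q i v)
    (c : Fin l → ℝ) (hc0 : ∀ i, 0 ≤ c i) (hpc : ∀ v, p v = ∑ i, c i * q i v)
    (hshift : ∀ (w : List A) (i : Fin l), ∃ d : Fin l → ℝ, (∀ j, 0 ≤ d j) ∧
      ∀ v : List A, q i (w ++ v) = ∑ j, d j * q j v) :
    ∃ m : ℕ, IsHMM m p := by
  classical
  have hq0 : ∀ i v, 0 ≤ q i v := fun i => (hq i).1
  have hq1 : ∀ i v, ∑ a : A, q i (v ++ [a]) = q i v := fun i => (hq i).2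
  choose d hd0 hdq using fun (a : A) (i : Fin l) => hshift [a] i
  set n := Fintype.card A with hn
  have hn0 : (n : ℝ) ≠ 0 := Nat.cast_ne_zero.mpr Fintype.card_ne_zero
  set N := l * n with hN
  set σ : Fin N ≃ Fin l × A :=
    finProdFinEquiv.symm.trans
      (Equiv.prodCongr (Equiv.refl (Fin l)) (Fintype.equivFin A).symm) with hσ
  set Am : Matrix (Fin N) (Fin N) ℝ := fun s t =>
    if q (σ s).1 [(σ s).2] = 0 then (if (σ t).1 = (σ s).1 then (n : ℝ)⁻¹ else 0)
    else d (σ s).2 (σ s).1 (σ t).1 * q (σ t).1 [(σ t).2] / q (σ s).1 [(σ s).2] with hAm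
  set E : Fin N → A → ℝ := fun s b => if b = (σ s).2 then 1 else 0 with hE
  set Pi0 : Fin N → ℝ := fun s => c (σ s).1 * q (σ s).1 [(σ s).2] with hPi
  refine ⟨N, Am, E, Pi0, ?_, ?_, ?_, ?_, ?_, ?_⟩
  · -- Am nonneg
    intro s t
    rw [hAm]
    dsimp only
    split
    · split
      · positivity
      · exact le_refl _
    · exact div_nonneg (mul_nonneg (hd0 _ _ _) (hq0 _ _)) (hq0 _ _)
  · -- row sums
    intro s
    rw [hAm]
    dsimp only
    by_cases h : q (σ s).1 [(σ s).2] = 0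
    · simp only [h, if_pos, if_true]
      have hswap : (∑ x : Fin N, if (σ x).1 = (σ s).1 then (n : ℝ)⁻¹ else 0)
          = ∑ y : Fin l × A, if y.1 = (σ s).1 then (n : ℝ)⁻¹ else 0 :=
        Equiv.sum_comp σ (fun y => if y.1 = (σ s).1 then (n : ℝ)⁻¹ else 0)
      rw [hswap, Fintype.sum_prod_type_right]
      have hin : ∀ y : A, (∑ x : Fin l, if (x, y).1 = (σ s).1 then (n:ℝ)⁻¹ else 0)
          = (n:ℝ)⁻¹ := by
        intro y
        simp [Finset.sum_ite_eq']
      rw [Finset.sum_congr rfl fun y _ => hin y, Finset.sum_const, nsmul_eq_mul,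
        Finset.card_univ]
      exact mul_inv_cancel₀ hn0
    · simp only [h, if_neg, if_false]
      have hswap : (∑ x : Fin N, d (σ s).2 (σ s).1 (σ x).1 * q (σ x).1 [(σ x).2]
            / q (σ s).1 [(σ s).2])
          = ∑ y : Fin l × A, d (σ s).2 (σ s).1 y.1 * q y.1 [y.2] / q (σ s).1 [(σ s).2] :=
        Equiv.sum_comp σ (fun y => d (σ s).2 (σ s).1 y.1 * q y.1 [y.2] / q (σ s).1 [(σ s).2])
      rw [hswap, Fintype.sum_prod_type]
      have hβ : ∀ j, (∑ β : A, d (σ s).2 (σ s).1 j * q j [β] / q (σ s).1 [(σ s).2])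
          = d (σ s).2 (σ s).1 j * q j [] / q (σ s).1 [(σ s).2] := by
        intro j
        rw [← Finset.sum_div, ← Finset.mul_sum]
        congr 2
        simpa using hq1 j []
      rw [Finset.sum_congr rfl fun j _ => hβ j, ← Finset.sum_div]
      have : ∑ j, d (σ s).2 (σ s).1 j * q j [] = q (σ s).1 [(σ s).2] := by
        have := hdq (σ s).2 (σ s).1 []
        simpa using this.symm
      rw [this, div_self h]
  · intro s b
    rw [hE]
    dsimp only
    split <;> norm_num
  · intro s
    rw [hE]
    simp
  · intro s
    exact mul_nonneg (hc0 _) (hq0 _ _)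
  · -- the main formula
    intro v
    set T : A → Matrix (Fin N) (Fin N) ℝ :=
      fun b => Amᵀ * Matrix.diagonal fun s => E s b with hT
    set f : List A → Fin N → ℝ := fun v s => ∑ t, wordProd T v t s with hf
    set G : List A → Fin l × A → ℝ := fun v y =>
      match v with
      | [] => q y.1 [y.2]
      | b :: t => if b = y.2 then q y.1 (b :: t) else 0 with hG
    have hGsum : ∀ (v : List A) (j : Fin l), ∑ β : A, G v (j, β) = q j v := by
      intro v j
      cases v with
      | nil => simpa [hG] using hq1 j []
      | cons b t => simp [hG]
    have hf_nil : ∀ s, f [] s = 1 := by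
      intro s
      rw [hf]
      dsimp only
      rw [wordProd_nil]
      simp [Matrix.one_apply]
    have hf_cons : ∀ b (v : List A) s, f (b :: v) s = E s b * ∑ u, Am s u * f v u := by
      intro b v s
      rw [hf]
      dsimp only
      rw [Finset.sum_congr rfl fun t (_ : t ∈ Finset.univ) => by
        rw [wordProd_cons, Matrix.mul_apply]]
      rw [Finset.sum_comm]
      rw [Finset.mul_sum]
      refine Finset.sum_congr rfl fun u _ => ?_
      rw [hT]
      dsimp only
      rw [T_entry, ← Finset.sum_mul]
      ring
    have claim : ∀ (v : List A) s, q (σ s).1 [(σ s).2] * f v s = G v (σ s) := by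
      intro v
      induction v with
      | nil =>
        intro s
        rw [hf_nil, mul_one]
      | cons b v ih =>
        intro s
        rw [hf_cons]
        by_cases hb : b = (σ s).2
        · have hEs : E s b = 1 := by rw [hE]; dsimp only; rw [if_pos hb]
          rw [hEs, one_mul]
          by_cases h0 : q (σ s).1 [(σ s).2] = 0
          · rw [h0, zero_mul]
            have : G (b :: v) (σ s) = q (σ s).1 (b :: v) := by
              rw [hG]; dsimp only; rw [if_pos hb]
            rw [this]
            have : (b :: v) = [(σ s).2] ++ v := by rw [hb]; rfl
            rw [this]
            exact (q_vanish (q (σ s).1) (hq0 _) (hq1 _) v [(σ s).2] h0).symm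
          · rw [Finset.mul_sum]
            have hterm : ∀ u, q (σ s).1 [(σ s).2] * (Am s u * f v u)
                = d (σ s).2 (σ s).1 (σ u).1 * G v (σ u) := by
              intro u
              rw [hAm]
              dsimp only
              rw [if_neg h0]
              rw [← ih u]
              field_simp
            rw [Finset.sum_congr rfl fun u _ => hterm u]
            have hswap : (∑ u : Fin N, d (σ s).2 (σ s).1 (σ u).1 * G v (σ u))
                = ∑ y : Fin l × A, d (σ s).2 (σ s).1 y.1 * G v y :=
              Equiv.sum_comp σ (fun y => d (σ s).2 (σ s).1 y.1 * G v y)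
            rw [hswap, Fintype.sum_prod_type]
            have hstep : ∀ j : Fin l, (∑ β : A, d (σ s).2 (σ s).1 j * G v (j, β))
                = d (σ s).2 (σ s).1 j * q j v := by
              intro j
              rw [← Finset.mul_sum, hGsum v j]
            rw [Finset.sum_congr rfl fun j _ => hstep j]
            have : ∑ j, d (σ s).2 (σ s).1 j * q j v = q (σ s).1 ([(σ s).2] ++ v) :=
              (hdq (σ s).2 (σ s).1 v).symm
            rw [this]
            rw [hG]
            dsimp only
            rw [if_pos hb, hb]
            rfl
        · have hEs : E s b = 0 := by rw [hE]; dsimp only; rw [if_neg hb]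
          rw [hEs, zero_mul, mul_zero]
          rw [hG]
          dsimp only
          rw [if_neg hb]
    -- conclude
    rw [one_dot_mulVec]
    calc p v = ∑ j, c j * q j v := hpc v
      _ = ∑ j, ∑ β : A, c j * G v (j, β) := by
          refine Finset.sum_congr rfl fun j _ => ?_
          rw [← Finset.mul_sum, hGsum v j]
      _ = ∑ y : Fin l × A, c y.1 * G v y := by rw [Fintype.sum_prod_type]
      _ = ∑ t, c (σ t).1 * G v (σ t) := (Equiv.sum_comp σ (fun y => c y.1 * G v y)).symm
      _ = ∑ t, c (σ t).1 * (q (σ t).1 [(σ t).2] * f v t) := by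
          refine Finset.sum_congr rfl fun t _ => ?_
          rw [claim v t]
      _ = ∑ t, f v t * Pi0 t := by
          refine Finset.sum_congr rfl fun t _ => ?_
          rw [hPi]
          dsimp only
          ring
      _ = ∑ t, (∑ s, wordProd T v s t) * Pi0 t := by
          refine Finset.sum_congr rfl fun t _ => ?_
          rw [hf]
      _ = ∑ s, ∑ t, wordProd T v s t * Pi0 t := by
          rw [Finset.sum_comm]
          exact Finset.sum_congr rfl fun t _ => by rw [Finset.sum_mul]
      _ = ∑ j, ∑ m, wordProd (fun a => Amᵀ * Matrix.diagonal fun i => E i a) v j m * Pi0 m := by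
          rw [hT]

end Rev

/-- **Heller, 1965.** `p` is associated with an unconstrained hidden Markov
process on some finite number of hidden states iff there exist finitely many USSFs
`p₁,…,p_l` in the column space of the Hankel matrix of `p` such that (a) `p` is a
nonnegative combination of the `pᵢ`, and (b) each column `(pᵢ)^w` is a nonnegative
combination of the `pᵢ`. -/
theorem stmt11 {A : Type*} [Fintype A] [Nonempty A] (p : List A → ℝ) :
    (∃ l : ℕ, IsHMM l p) ↔
      ∃ (l : ℕ) (q : Fin l → (List A → ℝ)),
        (∀ i, (∀ v : List A, 0 ≤ q i v) ∧
          ∀ v : List A, ∑ a : A, q i (v ++ [a]) = q i v) ∧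
        (∀ i, q i ∈ Submodule.span ℝ (Set.range (hankelCol p))) ∧
        (∃ c : Fin l → ℝ, (∀ i, 0 ≤ c i) ∧ ∀ v : List A, p v = ∑ i, c i * q i v) ∧
        (∀ (w : List A) (i : Fin l), ∃ c : Fin l → ℝ, (∀ j, 0 ≤ c j) ∧
          ∀ v : List A, q i (w ++ v) = ∑ j, c j * q j v) := by
  constructor
  · exact forward_dir p
  · rintro ⟨l, q, hq, hspan, ⟨c, hc0, hpc⟩, hshift⟩
    exact reverse_dir p l q hq c hc0 hpc hshift
end
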